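/- arXiv:2110.02555 — 4 statements merged into one kernel-verified Lean document; each statement's English description precedes it below -/
import Mathlib

section
/- In the last-choice reduction (preference lists as in the generous gadget where v^7_i: (v^8_i, v^6_i, w^4_i)), if G is a cubic graph with n vertices and C a vertex cover of size k, then the matching given by case 1 on agent groups of vertices in C and case 2 on agent groups of vertices not in C is a stable matching with exactly 4k + 3(n − k) = 3n + k agents matched to their third choices, and no agent matched to a rank worse than 3. -/
/-- An SRI instance: each agent has a strict preference list over acceptable agents. -/
structure SRI (A : Type) where
  pref : A → List A

namespace SRI

variable {A : Type} [DecidableEq A]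

/-- `b` is acceptable to `a`. -/
def acceptable (I : SRI A) (a b : A) : Prop := b ∈ I.pref a

/-- rank(a,b): 1 plus the number of agents `a` prefers to `b`. -/
def rank (I : SRI A) (a b : A) : ℕ := (I.pref a).idxOf b + 1

/-- `M` (a partner function) is a matching: symmetric and irreflexive. -/
def IsMatching (M : A → Option A) : Prop :=
  (∀ a b, M a = some b → M b = some a) ∧ ∀ a, M a ≠ some a

/-- `{a,b}` is a blocking pair for `M`: mutually acceptable, and each is
unmatched or prefers the other to its partner. -/
def Blocks (I : SRI A) (M : A → Option A) (a b : A) : Prop :=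
  a ≠ b ∧ I.acceptable a b ∧ I.acceptable b a ∧
    (∀ c, M a = some c → I.rank a b < I.rank a c) ∧
    (∀ c, M b = some c → I.rank b a < I.rank b c)

/-- `M` is a stable matching of `I`. -/
def IsStable (I : SRI A) (M : A → Option A) : Prop :=
  IsMatching M ∧ (∀ a b, M a = some b → I.acceptable a b ∧ I.acceptable b a) ∧
    ∀ a b, ¬ I.Blocks M a b

open Classical in
/-- The number of agents matched to their `k`-th choice in `M` (the `k`-th profile entry). -/
noncomputable def nChoices [Fintype A] (I : SRI A) (M : A → Option A) (k : ℕ) : ℕ :=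
  (Finset.univ.filter (fun a => ∃ b, M a = some b ∧ I.rank a b = k)).card

/-- The cost of a matching: the sum over matched agents of the rank of their partner. -/
def cost [Fintype A] (I : SRI A) (M : A → Option A) : ℕ :=
  ∑ a, (M a).elim 0 (I.rank a)

end SRI

/-- Agents of the reduction instance: for each vertex `i` of the graph, eight
agents `v^1_i,…,v^8_i` (indexed 0–7), five agents `w^1_i,…,w^5_i` and five agents
`x^1_i,…,x^5_i` (indexed 0–4). -/
abbrev FCAgent (n : ℕ) := Fin n × (Fin 8 ⊕ Fin 5 ⊕ Fin 5)

namespace FCAgent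

/-- The agent `v^{r+1}_i`. -/
def v {n : ℕ} (i : Fin n) (r : Fin 8) : FCAgent n := (i, Sum.inl r)

/-- The agent `w^{j+1}_i`. -/
def w {n : ℕ} (i : Fin n) (j : Fin 5) : FCAgent n := (i, Sum.inr (Sum.inl j))

/-- The agent `x^{j+1}_i`. -/
def x {n : ℕ} (i : Fin n) (j : Fin 5) : FCAgent n := (i, Sum.inr (Sum.inr j))

/-- The odd `v`-agent `v^{2s+1}` sitting in slot `s` of a vertex. -/
def slotAgent {n : ℕ} (p : Fin n × Fin 3) : FCAgent n :=
  v p.1 ⟨2 * p.2.val, by have := p.2.isLt; omega⟩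

/-- The `v`-agent that is `w^{j+1}_i`'s second choice: `w^1↔v^2, w^2↔v^4, w^3↔v^6,
w^4↔v^7, w^5↔v^8`. -/
def wPartner {n : ℕ} (i : Fin n) (j : Fin 5) : FCAgent n :=
  v i (match j.val with
    | 0 => 1
    | 1 => 3
    | 2 => 5
    | 3 => 6
    | _ => 7)

end FCAgent

/-- The preference lists of the reduction instance, given a slot-assignment `mate`
pairing each of the three slots (`v^1, v^3, v^5`) of each vertex with a slot of an
adjacent vertex:
`v^1_i: (v^2_i, v^s, v^8_i)`, `v^2_i: (v^3_i, w^1_i, v^1_i)`,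
`v^3_i: (v^4_i, v^{s'}, v^2_i)`, `v^4_i: (v^5_i, w^2_i, v^3_i)`,
`v^5_i: (v^6_i, v^{s''}, v^4_i)`, `v^6_i: (v^7_i, w^3_i, v^5_i)`,
`v^7_i: (v^8_i, v^6_i, w^4_i)`, `v^8_i: (v^1_i, w^5_i, v^7_i)`,
`w^j_i: (x^j_i, corresponding v-agent)`, `x^j_i: (w^j_i)`. -/
def FCpref (n : ℕ) (mate : Fin n → Fin 3 → Fin n × Fin 3) : FCAgent n → List (FCAgent n) :=
  fun a => match a with
  | (i, Sum.inl r) =>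
    match r.val with
    | 0 => [FCAgent.v i 1, FCAgent.slotAgent (mate i 0), FCAgent.v i 7]
    | 1 => [FCAgent.v i 2, FCAgent.w i 0, FCAgent.v i 0]
    | 2 => [FCAgent.v i 3, FCAgent.slotAgent (mate i 1), FCAgent.v i 1]
    | 3 => [FCAgent.v i 4, FCAgent.w i 1, FCAgent.v i 2]
    | 4 => [FCAgent.v i 5, FCAgent.slotAgent (mate i 2), FCAgent.v i 3]
    | 5 => [FCAgent.v i 6, FCAgent.w i 2, FCAgent.v i 4]
    | 6 => [FCAgent.v i 7, FCAgent.v i 5, FCAgent.w i 3]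
    | _ => [FCAgent.v i 0, FCAgent.w i 4, FCAgent.v i 6]
  | (i, Sum.inr (Sum.inl j)) => [FCAgent.x i j, FCAgent.wPartner i j]
  | (i, Sum.inr (Sum.inr j)) => [FCAgent.w i j]

/-- The matching built from a vertex cover `C`: always `{x^j_i, w^j_i}`; for
`i ∈ C` (case 1) the pairs `{v^1,v^2},{v^3,v^4},{v^5,v^6},{v^7,v^8}`; for `i ∉ C`
(case 2) the pairs `{v^2,v^3},{v^4,v^5},{v^6,v^7},{v^8,v^1}`. -/
def FCmatch (n : ℕ) (C : Finset (Fin n)) : FCAgent n → Option (FCAgent n) :=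
  fun a => match a with
  | (i, Sum.inl r) =>
      if i ∈ C then
        some (FCAgent.v i
          ⟨(if r.val % 2 = 0 then r.val + 1 else r.val - 1) % 8, Nat.mod_lt _ (by norm_num)⟩)
      else
        some (FCAgent.v i
          ⟨(if r.val % 2 = 1 then r.val + 1 else r.val + 7) % 8, Nat.mod_lt _ (by norm_num)⟩)
  | (i, Sum.inr (Sum.inl j)) => some (FCAgent.x i j)
  | (i, Sum.inr (Sum.inr j)) => some (FCAgent.w i j)

namespace LCwork
open FCAgent

variable {n : ℕ}

lemma slot_ne7 (t : Fin 3) (h : 2 * t.val < 8) : ((⟨2 * t.val, h⟩ : Fin 8) = 7) = False := by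
  (first | (simp [Fin.ext_iff]; omega) | simp [Fin.ext_iff])
lemma slot_ne1 (t : Fin 3) (h : 2 * t.val < 8) : ((⟨2 * t.val, h⟩ : Fin 8) = 1) = False := by
  (first | (simp [Fin.ext_iff]; omega) | simp [Fin.ext_iff])
lemma slot_ne3 (t : Fin 3) (h : 2 * t.val < 8) : ((⟨2 * t.val, h⟩ : Fin 8) = 3) = False := by
  (first | (simp [Fin.ext_iff]; omega) | simp [Fin.ext_iff])

def prank (C : Finset (Fin n)) : FCAgent n → ℕ
  | (i, Sum.inl r) => if i ∈ C then (if r.val % 2 = 0 then 1 else 3)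
      else (if r.val % 2 = 1 then 1 else if r.val = 6 then 2 else 3)
  | (_, Sum.inr _) => 1

lemma key (mate : Fin n → Fin 3 → Fin n × Fin 3) (C : Finset (Fin n)) :
    ∀ a b, FCmatch n C a = some b →
      b ∈ FCpref n mate a ∧ (SRI.mk (FCpref n mate)).rank a b = prank C a := by
  rintro ⟨i, r | j | j⟩ b hb
  · by_cases hi : i ∈ C <;>
    [simp only [FCmatch, hi, if_true] at hb;
     simp only [FCmatch, hi, if_false] at hb] <;>
    fin_cases r <;>
    simp only [Option.some.injEq] at hb <;> subst hb <;>
    constructor <;>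
    simp [FCpref, prank, SRI.rank, hi, List.idxOf_cons_self, List.idxOf_cons_ne,
      List.idxOf_cons_eq, FCAgent.v, FCAgent.w, FCAgent.slotAgent,
      slot_ne7, slot_ne1, slot_ne3]
  · simp only [FCmatch, Option.some.injEq] at hb; subst hb
    constructor <;>
    simp [FCpref, prank, SRI.rank, List.idxOf_cons_self]
  · simp only [FCmatch, Option.some.injEq] at hb; subst hb
    constructor <;>
    simp [FCpref, prank, SRI.rank, List.idxOf_cons_self]


lemma matched (mate : Fin n → Fin 3 → Fin n × Fin 3) (C : Finset (Fin n)) (a : FCAgent n) :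
    ∃ b, FCmatch n C a = some b := by
  rcases a with ⟨i, r | j | j⟩ <;> simp only [FCmatch]
  · by_cases hi : i ∈ C <;> simp [hi]
  · exact ⟨_, rfl⟩
  · exact ⟨_, rfl⟩

lemma symm (mate : Fin n → Fin 3 → Fin n × Fin 3) (C : Finset (Fin n)) :
    ∀ a b, FCmatch n C a = some b → FCmatch n C b = some a := by
  rintro ⟨i, r | j | j⟩ b hb
  · by_cases hi : i ∈ C <;>
    [simp only [FCmatch, hi, if_true] at hb;
     simp only [FCmatch, hi, if_false] at hb] <;>
    fin_cases r <;>
    simp only [Option.some.injEq] at hb <;> subst hb <;>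
    simp [FCmatch, hi, FCAgent.v, Fin.ext_iff] <;> decide
  · simp only [FCmatch, Option.some.injEq] at hb; subst hb
    simp [FCmatch, FCAgent.x, FCAgent.w]
  · simp only [FCmatch, Option.some.injEq] at hb; subst hb
    simp [FCmatch, FCAgent.x, FCAgent.w]

lemma irrefl (mate : Fin n → Fin 3 → Fin n × Fin 3) (C : Finset (Fin n)) :
    ∀ a, FCmatch n C a ≠ some a := by
  rintro ⟨i, r | j | j⟩ h
  · by_cases hi : i ∈ C <;>
    [simp only [FCmatch, hi, if_true] at h;
     simp only [FCmatch, hi, if_false] at h] <;>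
    fin_cases r <;>
    simp [FCAgent.v, Fin.ext_iff] at h <;> revert h <;> decide
  · simp [FCmatch, FCAgent.x] at h
  · simp [FCmatch, FCAgent.w] at h
lemma pick2' {A : Type} [DecidableEq A] (x y z b : A)
    (h : List.idxOf b [x, y, z] + 1 < 3) : b = x ∨ b = y := by
  by_cases h1 : x = b
  · exact Or.inl h1.symm
  by_cases h2 : y = b
  · exact Or.inr h2.symm
  rw [List.idxOf_cons_ne _ h1, List.idxOf_cons_ne _ h2] at h
  omega

lemma pick1' {A : Type} [DecidableEq A] (x y z b : A)
    (h : List.idxOf b [x, y, z] + 1 < 2) : b = x := by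
  by_cases h1 : x = b
  · exact h1.symm
  rw [List.idxOf_cons_ne _ h1] at h
  omega

lemma no_blocks (mate : Fin n → Fin 3 → Fin n × Fin 3) (C : Finset (Fin n))
    (hcov : ∀ i s, i ∉ C → (mate i s).1 ∈ C) :
    ∀ a b, ¬ (SRI.mk (FCpref n mate)).Blocks (FCmatch n C) a b := by
  rintro a b ⟨hne, hab, hba, h4, h5⟩
  obtain ⟨pa, hpa⟩ := matched mate C a
  obtain ⟨pb, hpb⟩ := matched mate C b
  have h4' : (SRI.mk (FCpref n mate)).rank a b < prank C a :=
    (key mate C a pa hpa).2 ▸ h4 pa hpa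
  have h5' : (SRI.mk (FCpref n mate)).rank b a < prank C b :=
    (key mate C b pb hpb).2 ▸ h5 pb hpb
  have hbge : 2 ≤ prank C b := by
    simp only [SRI.rank] at h5'; omega
  clear h4 h5 hne hba hab hpa hpb h5'
  obtain ⟨i, r | j | j⟩ := a
  rotate_left
  · simp only [prank, SRI.rank] at h4'; omega
  · simp only [prank, SRI.rank] at h4'; omega
  by_cases hi : i ∈ C
  · fin_cases r
    · simp [SRI.rank, prank, hi] at h4'
    · rcases pick2' (FCAgent.v i 2) (FCAgent.w i 0) (FCAgent.v i 0) b
        (by simpa [SRI.rank, FCpref, prank, hi] using h4') with rfl | rfl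
      · exact absurd hbge (by simp [prank, FCAgent.v, hi] <;> decide)
      · exact absurd hbge (by simp [prank, FCAgent.w] <;> decide)
    · simp [SRI.rank, prank, hi] at h4'
    · rcases pick2' (FCAgent.v i 4) (FCAgent.w i 1) (FCAgent.v i 2) b
        (by simpa [SRI.rank, FCpref, prank, hi] using h4') with rfl | rfl
      · exact absurd hbge (by simp [prank, FCAgent.v, hi] <;> decide)
      · exact absurd hbge (by simp [prank, FCAgent.w] <;> decide)
    · simp [SRI.rank, prank, hi] at h4'
    · rcases pick2' (FCAgent.v i 6) (FCAgent.w i 2) (FCAgent.v i 4) b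
        (by simpa [SRI.rank, FCpref, prank, hi] using h4') with rfl | rfl
      · exact absurd hbge (by simp [prank, FCAgent.v, hi] <;> decide)
      · exact absurd hbge (by simp [prank, FCAgent.w] <;> decide)
    · simp [SRI.rank, prank, hi] at h4'
    · rcases pick2' (FCAgent.v i 0) (FCAgent.w i 4) (FCAgent.v i 6) b
        (by simpa [SRI.rank, FCpref, prank, hi] using h4') with rfl | rfl
      · exact absurd hbge (by simp [prank, FCAgent.v, hi] <;> decide)
      · exact absurd hbge (by simp [prank, FCAgent.w] <;> decide)
  · fin_cases r
    · rcases pick2' (FCAgent.v i 1) (FCAgent.slotAgent (mate i 0)) (FCAgent.v i 7) b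
        (by simpa [SRI.rank, FCpref, prank, hi] using h4') with rfl | rfl
      · exact absurd hbge (by simp [prank, FCAgent.v, hi] <;> decide)
      · exact absurd hbge
          (by simp [prank, FCAgent.slotAgent, FCAgent.v, hcov i 0 hi, Nat.mul_mod_right] <;> omega)
    · simp [SRI.rank, prank, hi] at h4'
    · rcases pick2' (FCAgent.v i 3) (FCAgent.slotAgent (mate i 1)) (FCAgent.v i 1) b
        (by simpa [SRI.rank, FCpref, prank, hi] using h4') with rfl | rfl
      · exact absurd hbge (by simp [prank, FCAgent.v, hi] <;> decide)
      · exact absurd hbge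
          (by simp [prank, FCAgent.slotAgent, FCAgent.v, hcov i 1 hi, Nat.mul_mod_right] <;> omega)
    · simp [SRI.rank, prank, hi] at h4'
    · rcases pick2' (FCAgent.v i 5) (FCAgent.slotAgent (mate i 2)) (FCAgent.v i 3) b
        (by simpa [SRI.rank, FCpref, prank, hi] using h4') with rfl | rfl
      · exact absurd hbge (by simp [prank, FCAgent.v, hi] <;> decide)
      · exact absurd hbge
          (by simp [prank, FCAgent.slotAgent, FCAgent.v, hcov i 2 hi, Nat.mul_mod_right] <;> omega)
    · simp [SRI.rank, prank, hi] at h4'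
    · have := pick1' (FCAgent.v i 7) (FCAgent.v i 5) (FCAgent.w i 3) b
        (by simpa [SRI.rank, FCpref, prank, hi] using h4')
      subst this
      exact absurd hbge (by simp [prank, FCAgent.v, hi] <;> decide)
    · simp [SRI.rank, prank, hi] at h4'
lemma count3 (mate : Fin n → Fin 3 → Fin n × Fin 3) (C : Finset (Fin n)) :
    (SRI.mk (FCpref n mate)).nChoices (FCmatch n C) 3 = 3 * n + C.card := by
  classical
  unfold SRI.nChoices
  have hiff : ∀ a : FCAgent n,
      (∃ b, FCmatch n C a = some b ∧ (SRI.mk (FCpref n mate)).rank a b = 3) ↔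
        prank C a = 3 := by
    intro a
    obtain ⟨pa, hpa⟩ := matched mate C a
    constructor
    · rintro ⟨b, hb, hr⟩
      rw [← (key mate C a b hb).2]
      exact hr
    · intro h
      exact ⟨pa, hpa, ((key mate C a pa hpa).2).trans h⟩
  rw [Finset.card_filter]
  rw [Fintype.sum_prod_type]
  simp only [hiff]
  have h2 : ∀ i : Fin n,
      (∑ s : Fin 8 ⊕ Fin 5 ⊕ Fin 5, if prank C (i, s) = 3 then (1:ℕ) else 0) =
        if i ∈ C then 4 else 3 := by
    intro i
    simp only [Fintype.sum_sum_type, Fin.sum_univ_eight, Fin.sum_univ_five]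
    by_cases hi : i ∈ C <;> simp [prank, hi] <;> decide
  rw [Finset.sum_congr rfl (fun i _ => h2 i)]
  have h3 : ∀ i : Fin n, (if i ∈ C then (4:ℕ) else 3) = 3 + (if i ∈ C then 1 else 0) := by
    intro i; split <;> rfl
  rw [Finset.sum_congr rfl (fun i _ => h3 i), Finset.sum_add_distrib,
    Finset.sum_const, Finset.sum_ite_mem, Finset.univ_inter, Finset.sum_const,
    Finset.card_univ, Fintype.card_fin, smul_eq_mul, smul_eq_mul]
  omega

end LCwork

/-- In the last-choice reduction (the gadget with `v^7_i: (v^8_i, v^6_i, w^4_i)`),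
if `G` is a cubic graph with `n` vertices and `C` a vertex cover of size `k`, then
the matching given by case 1 on agent groups of vertices in `C` and case 2
elsewhere is a stable matching with exactly `3n + k` agents matched to their third
choices, and no agent matched to a rank worse than 3. -/
theorem lc_reduction_cover_gives_stable {n : ℕ} (G : SimpleGraph (Fin n))
    [DecidableRel G.Adj] (hcubic : ∀ i, G.degree i = 3)
    (mate : Fin n → Fin 3 → Fin n × Fin 3)
    (hmadj : ∀ i s, G.Adj i (mate i s).1)
    (hminv : ∀ i s, mate (mate i s).1 (mate i s).2 = (i, s))
    (hmcov : ∀ i j, G.Adj i j → ∃! s, (mate i s).1 = j)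
    (C : Finset (Fin n)) (hC : ∀ i j, G.Adj i j → i ∈ C ∨ j ∈ C) :
    (SRI.mk (FCpref n mate)).IsStable (FCmatch n C) ∧
      (SRI.mk (FCpref n mate)).nChoices (FCmatch n C) 3 = 3 * n + C.card ∧
      (∀ a b, FCmatch n C a = some b → (SRI.mk (FCpref n mate)).rank a b ≤ 3) := by
  have hcov : ∀ i s, i ∉ C → (mate i s).1 ∈ C := fun i s hi =>
    (hC i (mate i s).1 (hmadj i s)).resolve_left hi
  refine ⟨⟨⟨LCwork.symm mate C, LCwork.irrefl mate C⟩, ?_, LCwork.no_blocks mate C hcov⟩,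
    LCwork.count3 mate C, ?_⟩
  · intro a b hab
    exact ⟨(LCwork.key mate C a b hab).1,
      (LCwork.key mate C b a (LCwork.symm mate C a b hab)).1⟩
  · intro a b hab
    rw [(LCwork.key mate C a b hab).2]
    rcases a with ⟨i, r | j | j⟩ <;> simp [LCwork.prank] <;> split_ifs <;> omega
end

section
/- In the independent-set reduction instance for FC-SRI: for each vertex u_i, after iteratively deleting pairs that can appear in no stable matching, the reduced preference lists are v_i: (w_i, [neighbours v_j], y_i); w_i: (x_i, v_i); x_i: (y_i, w_i); y_i: (v_i, x_i); a_i: (b_i); b_i: (a_i). In particular {a_i, b_i} belongs to every stable matching of the instance. -/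
/-- Agents of the independent-set reduction: for each vertex `i` of the graph, six
agents `v_i, w_i, x_i, y_i, a_i, b_i` (indexed by `Fin 6` in this order). -/
abbrev ISAgent (n : ℕ) := Fin n × Fin 6

namespace ISAgent

def va {n : ℕ} (i : Fin n) : ISAgent n := (i, 0)
def wa {n : ℕ} (i : Fin n) : ISAgent n := (i, 1)
def xa {n : ℕ} (i : Fin n) : ISAgent n := (i, 2)
def ya {n : ℕ} (i : Fin n) : ISAgent n := (i, 3)
def aa {n : ℕ} (i : Fin n) : ISAgent n := (i, 4)
def ba {n : ℕ} (i : Fin n) : ISAgent n := (i, 5)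

end ISAgent

open ISAgent in
/-- The preference lists of the independent-set reduction instance built from `G`:
`v_i: (a_i, w_i, [v_j for neighbours u_j of u_i], y_i)`;
`w_i: (x_i, v_i, a_i, b_i)`; `x_i: (a_i, y_i, w_i)`; `y_i: (a_i, v_i, x_i)`;
`a_i: (w_i, b_i, v_i, x_i, y_i)`; `b_i: (w_i, a_i)`. -/
def ISpref (n : ℕ) (G : SimpleGraph (Fin n)) [DecidableRel G.Adj] :
    ISAgent n → List (ISAgent n) :=
  fun p => match p.2.val with
  | 0 => [aa p.1, wa p.1] ++
      (Finset.sort (G.neighborFinset p.1) (· ≤ ·)).map va ++ [ya p.1]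
  | 1 => [xa p.1, va p.1, aa p.1, ba p.1]
  | 2 => [aa p.1, ya p.1, wa p.1]
  | 3 => [aa p.1, va p.1, xa p.1]
  | 4 => [wa p.1, ba p.1, va p.1, xa p.1, ya p.1]
  | _ => [wa p.1, aa p.1]

open ISAgent in
/-- The matching built from a set `S` of vertices: always `{a_i, b_i}`; for
`i ∈ S` the pairs `{v_i, y_i}` and `{w_i, x_i}`; for `i ∉ S` the pairs
`{v_i, w_i}` and `{x_i, y_i}`. -/
def ISmatch (n : ℕ) (S : Finset (Fin n)) : ISAgent n → Option (ISAgent n) :=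
  fun p => match p.2.val with
  | 0 => some (if p.1 ∈ S then ya p.1 else wa p.1)
  | 1 => some (if p.1 ∈ S then xa p.1 else va p.1)
  | 2 => some (if p.1 ∈ S then wa p.1 else ya p.1)
  | 3 => some (if p.1 ∈ S then va p.1 else xa p.1)
  | 4 => some (ba p.1)
  | _ => some (aa p.1)

section Aux
open ISAgent

variable {n : ℕ} (G : SimpleGraph (Fin n)) [DecidableRel G.Adj] (i : Fin n)

private lemma pref_w : ISpref n G (wa i) = [xa i, va i, aa i, ba i] := rfl
private lemma pref_x : ISpref n G (xa i) = [aa i, ya i, wa i] := rfl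
private lemma pref_a : ISpref n G (aa i) = [wa i, ba i, va i, xa i, ya i] := rfl
private lemma pref_b : ISpref n G (ba i) = [wa i, aa i] := rfl
private lemma pref_v : ISpref n G (va i) =
    aa i :: wa i :: ((Finset.sort (G.neighborFinset i) (· ≤ ·)).map va ++ [ya i]) := rfl

private lemma rank_w_x : (SRI.mk (ISpref n G)).rank (wa i) (xa i) = 1 := by
  simp [SRI.rank, ISpref, wa, xa]
private lemma rank_w_v : (SRI.mk (ISpref n G)).rank (wa i) (va i) = 2 := by
  simp [SRI.rank, ISpref, wa, xa, va, List.idxOf_cons]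
private lemma rank_w_a : (SRI.mk (ISpref n G)).rank (wa i) (aa i) = 3 := by
  simp [SRI.rank, ISpref, wa, xa, va, aa, List.idxOf_cons]
private lemma rank_w_b : (SRI.mk (ISpref n G)).rank (wa i) (ba i) = 4 := by
  simp [SRI.rank, ISpref, wa, xa, va, aa, ba, List.idxOf_cons]
private lemma rank_x_a : (SRI.mk (ISpref n G)).rank (xa i) (aa i) = 1 := by
  simp [SRI.rank, ISpref, xa, aa]
private lemma rank_x_y : (SRI.mk (ISpref n G)).rank (xa i) (ya i) = 2 := by
  simp [SRI.rank, ISpref, xa, aa, ya, List.idxOf_cons]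
private lemma rank_x_w : (SRI.mk (ISpref n G)).rank (xa i) (wa i) = 3 := by
  simp [SRI.rank, ISpref, xa, aa, ya, wa, List.idxOf_cons]
private lemma rank_a_w : (SRI.mk (ISpref n G)).rank (aa i) (wa i) = 1 := by
  simp [SRI.rank, ISpref, aa, wa]
private lemma rank_a_b : (SRI.mk (ISpref n G)).rank (aa i) (ba i) = 2 := by
  simp [SRI.rank, ISpref, aa, wa, ba, List.idxOf_cons]
private lemma rank_a_v : (SRI.mk (ISpref n G)).rank (aa i) (va i) = 3 := by
  simp [SRI.rank, ISpref, aa, wa, ba, va, List.idxOf_cons]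
private lemma rank_a_x : (SRI.mk (ISpref n G)).rank (aa i) (xa i) = 4 := by
  simp [SRI.rank, ISpref, aa, wa, ba, va, xa, List.idxOf_cons]
private lemma rank_a_y : (SRI.mk (ISpref n G)).rank (aa i) (ya i) = 5 := by
  simp [SRI.rank, ISpref, aa, wa, ba, va, xa, ya, List.idxOf_cons]
private lemma rank_v_a : (SRI.mk (ISpref n G)).rank (va i) (aa i) = 1 := by
  simp [SRI.rank, ISpref, va, aa]
private lemma rank_v_w : (SRI.mk (ISpref n G)).rank (va i) (wa i) = 2 := by
  simp [SRI.rank, ISpref, va, aa, wa, List.idxOf_cons]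

/-- any agent with rank ≤ 2 in v's list is a or w -/
private lemma rank_v_small (c : ISAgent n) (h : (SRI.mk (ISpref n G)).rank (va i) c ≤ 2) :
    c = aa i ∨ c = wa i := by
  by_contra hc
  push_neg at hc
  have h1 : (SRI.mk (ISpref n G)).rank (va i) c ≥ 3 := by
    have := pref_v G i
    simp only [SRI.rank, this]
    rw [@List.idxOf_cons_ne _ instBEqOfDecidableEq _ _ _ _ (Ne.symm hc.1),
      @List.idxOf_cons_ne _ instBEqOfDecidableEq _ _ _ _ (Ne.symm hc.2)]
    omega
  omega

end Aux
open ISAgent in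
/-- In the independent-set reduction instance for FC-SRI, iterated deletion removes
precisely the pairs `{b_i, w_i}`, `{a_i, v_i}`, `{a_i, x_i}`, `{a_i, y_i}` and
`{a_i, w_i}`: none of these pairs occurs in any stable matching. In particular,
`{a_i, b_i}` belongs to every stable matching of the instance. -/
theorem is_reduction_reduced_lists {n : ℕ} (G : SimpleGraph (Fin n))
    [DecidableRel G.Adj]
    (M : ISAgent n → Option (ISAgent n))
    (hM : (SRI.mk (ISpref n G)).IsStable M) :
    ∀ i : Fin n,
      M (aa i) = some (ba i) ∧
      M (ba i) ≠ some (wa i) ∧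
      M (aa i) ≠ some (va i) ∧
      M (aa i) ≠ some (xa i) ∧
      M (aa i) ≠ some (ya i) ∧
      M (aa i) ≠ some (wa i) := by
  obtain ⟨⟨hsym, -⟩, hacc, hnb⟩ := hM
  intro i
  have noblock : ∀ a b : ISAgent n, a ≠ b →
      b ∈ ISpref n G a → a ∈ ISpref n G b →
      (∀ c, M b = some c →
        (SRI.mk (ISpref n G)).rank b a < (SRI.mk (ISpref n G)).rank b c) →
      ∃ c, M a = some c ∧
        (SRI.mk (ISpref n G)).rank a c ≤ (SRI.mk (ISpref n G)).rank a b := by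
    intro a b h1 h2 h3 h5
    by_contra h
    push_neg at h
    exact hnb a b ⟨h1, h2, h3, fun c hc => h c hc, h5⟩
  -- distinctness
  have nvw : va i ≠ wa i := by simp [va, wa]
  have naw : aa i ≠ wa i := by simp [aa, wa]
  have nab : aa i ≠ ba i := by simp [aa, ba]
  have nvb : va i ≠ ba i := by simp [va, ba]
  have nva : va i ≠ aa i := by simp [va, aa]
  -- memberships
  have mwv : wa i ∈ ISpref n G (va i) := by rw [pref_v]; simp
  have mvw : va i ∈ ISpref n G (wa i) := by rw [pref_w]; simp
  have mwa : wa i ∈ ISpref n G (aa i) := by rw [pref_a]; simp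
  have maw : aa i ∈ ISpref n G (wa i) := by rw [pref_w]; simp
  have mba : ba i ∈ ISpref n G (aa i) := by rw [pref_a]; simp
  have mab : aa i ∈ ISpref n G (ba i) := by rw [pref_b]; simp
  -- Step A : M (ba i) ≠ some (wa i)
  have stepA : M (ba i) ≠ some (wa i) := by
    intro hbw
    have hwb : M (wa i) = some (ba i) := hsym _ _ hbw
    have h5vw : ∀ c, M (wa i) = some c →
        (SRI.mk (ISpref n G)).rank (wa i) (va i) < (SRI.mk (ISpref n G)).rank (wa i) c := by
      intro c hc
      rw [hwb] at hc
      cases hc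
      rw [rank_w_v, rank_w_b]
      omega
    obtain ⟨c, hc, hcle⟩ := noblock (va i) (wa i) nvw mwv mvw h5vw
    rw [rank_v_w] at hcle
    rcases rank_v_small G i c hcle with h | h
    · subst h
      have hav : M (aa i) = some (va i) := hsym _ _ hc
      -- {aa, wa} blocks
      refine hnb (aa i) (wa i) ⟨naw, mwa, maw, ?_, ?_⟩
      · intro d hd
        rw [hav] at hd
        cases hd
        rw [rank_a_w, rank_a_v]
        omega
      · intro d hd
        rw [hwb] at hd
        cases hd
        rw [rank_w_a, rank_w_b]
        omega
    · subst h
      have := hsym _ _ hc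
      rw [hwb] at this
      exact nvb (Option.some.inj this).symm
  -- Step B : M (aa i) = some (ba i)
  have key : M (aa i) = some (ba i) := by
    by_contra hab
    have hbnone : ∀ c, M (ba i) ≠ some c := by
      intro c hc
      have hmem : c ∈ ISpref n G (ba i) := (hacc _ _ hc).1
      rw [pref_b] at hmem
      simp only [List.mem_cons, List.mem_singleton, List.not_mem_nil, or_false] at hmem
      rcases hmem with h | h
      · subst h; exact stepA hc
      · subst h; exact hab (hsym _ _ hc)
    obtain ⟨c, hc, hcle⟩ := noblock (aa i) (ba i) nab mba mab
      (fun c hc => absurd hc (hbnone c))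
    rw [rank_a_b] at hcle
    have hcm : c ∈ ISpref n G (aa i) := (hacc _ _ hc).1
    rw [pref_a] at hcm
    simp only [List.mem_cons, List.not_mem_nil, or_false] at hcm
    have hcw : c = wa i := by
      rcases hcm with h | h | h | h | h
      · exact h
      · exact absurd (h ▸ hc) hab
      · subst h; rw [rank_a_v] at hcle; omega
      · subst h; rw [rank_a_x] at hcle; omega
      · subst h; rw [rank_a_y] at hcle; omega
    subst hcw
    have hwa : M (wa i) = some (aa i) := hsym _ _ hc
    have h5vw : ∀ d, M (wa i) = some d →
        (SRI.mk (ISpref n G)).rank (wa i) (va i) < (SRI.mk (ISpref n G)).rank (wa i) d := by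
      intro d hd
      rw [hwa] at hd
      cases hd
      rw [rank_w_v, rank_w_a]
      omega
    obtain ⟨d, hd, hdle⟩ := noblock (va i) (wa i) nvw mwv mvw h5vw
    rw [rank_v_w] at hdle
    rcases rank_v_small G i d hdle with h | h
    · subst h
      have := hsym _ _ hd
      rw [hc] at this
      exact nvw (Option.some.inj this).symm
    · subst h
      have := hsym _ _ hd
      rw [hwa] at this
      exact nva (Option.some.inj this).symm
  have hba : M (ba i) = some (aa i) := hsym _ _ key
  refine ⟨key, ?_, ?_, ?_, ?_, ?_⟩ <;> simp only [key, hba] <;>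
    simp [aa, ba, va, xa, ya, wa]
end

section
/- In the independent-set reduction instance for FC-SRI built from a graph G, if S is an independent set of G of size k, then the matching that pairs {a_i,b_i} for all i, pairs {v_i,w_i} and {x_i,y_i} for u_i ∉ S, and pairs {v_i,y_i} and {w_i,x_i} for u_i ∈ S, is a stable matching in which exactly k agents (namely the agents w_i with u_i ∈ S) are matched to their (original) first choice. -/
namespace ISRedProof
open ISAgent

variable {n : ℕ} (G : SimpleGraph (Fin n)) [DecidableRel G.Adj] (S : Finset (Fin n))

lemma indexOf_zero {A : Type} [DecidableEq A] {b c : A} {t : List A}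
    (h : List.idxOf b (c :: t) = 0) : b = c := by
  by_contra hne
  rw [List.idxOf_cons_ne _ (Ne.symm hne)] at h
  exact Nat.succ_ne_zero _ h

lemma two_of {A : Type} [DecidableEq A] {b c d : A} {t : List A}
    (h : List.idxOf b (c :: d :: t) ≤ 1) : b = c ∨ b = d := by
  by_cases h1 : b = c
  · exact Or.inl h1
  · right
    rw [List.idxOf_cons_ne _ (Ne.symm h1)] at h
    exact indexOf_zero (t := t) (by omega)

lemma head_of_lt {A : Type} [DecidableEq A] {I : SRI A} {a b c : A} {t : List A}
    (hp : I.pref a = c :: t) (h : I.rank a b < 2) : b = c := by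
  have h3 : List.idxOf b (I.pref a) + 1 < 2 := h
  rw [hp] at h3
  exact indexOf_zero (show List.idxOf b (c :: t) = 0 by omega)

lemma two_of_lt {A : Type} [DecidableEq A] {I : SRI A} {a b c d : A} {t : List A}
    (hp : I.pref a = c :: d :: t) (h : I.rank a b < 3) : b = c ∨ b = d := by
  have h3 : List.idxOf b (I.pref a) + 1 < 3 := h
  rw [hp] at h3
  exact two_of (show List.idxOf b (c :: d :: t) ≤ 1 by omega)

-- symmetry lemmas
lemma sym_v (i : Fin n) (b : ISAgent n) (h : ISmatch n S (va i) = some b) :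
    ISmatch n S b = some (va i) := by
  replace h : some (if i ∈ S then ya i else wa i) = some b := h
  rw [Option.some_inj] at h
  subst h
  by_cases hi : i ∈ S
  · rw [if_pos hi]; show some (if i ∈ S then va i else xa i) = _; rw [if_pos hi]
  · rw [if_neg hi]; show some (if i ∈ S then xa i else va i) = _; rw [if_neg hi]

lemma sym_w (i : Fin n) (b : ISAgent n) (h : ISmatch n S (wa i) = some b) :
    ISmatch n S b = some (wa i) := by
  replace h : some (if i ∈ S then xa i else va i) = some b := h
  rw [Option.some_inj] at h
  subst h
  by_cases hi : i ∈ S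
  · rw [if_pos hi]; show some (if i ∈ S then wa i else ya i) = _; rw [if_pos hi]
  · rw [if_neg hi]; show some (if i ∈ S then ya i else wa i) = _; rw [if_neg hi]

lemma sym_x (i : Fin n) (b : ISAgent n) (h : ISmatch n S (xa i) = some b) :
    ISmatch n S b = some (xa i) := by
  replace h : some (if i ∈ S then wa i else ya i) = some b := h
  rw [Option.some_inj] at h
  subst h
  by_cases hi : i ∈ S
  · rw [if_pos hi]; show some (if i ∈ S then xa i else va i) = _; rw [if_pos hi]
  · rw [if_neg hi]; show some (if i ∈ S then va i else xa i) = _; rw [if_neg hi]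

lemma sym_y (i : Fin n) (b : ISAgent n) (h : ISmatch n S (ya i) = some b) :
    ISmatch n S b = some (ya i) := by
  replace h : some (if i ∈ S then va i else xa i) = some b := h
  rw [Option.some_inj] at h
  subst h
  by_cases hi : i ∈ S
  · rw [if_pos hi]; show some (if i ∈ S then ya i else wa i) = _; rw [if_pos hi]
  · rw [if_neg hi]; show some (if i ∈ S then wa i else ya i) = _; rw [if_neg hi]

lemma sym_a (i : Fin n) (b : ISAgent n) (h : ISmatch n S (aa i) = some b) :
    ISmatch n S b = some (aa i) := by
  replace h : some (ba i) = some b := h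
  rw [Option.some_inj] at h
  subst h
  rfl

lemma sym_b (i : Fin n) (b : ISAgent n) (h : ISmatch n S (ba i) = some b) :
    ISmatch n S b = some (ba i) := by
  replace h : some (aa i) = some b := h
  rw [Option.some_inj] at h
  subst h
  rfl

lemma sym_all : ∀ a b : ISAgent n, ISmatch n S a = some b → ISmatch n S b = some a := by
  rintro ⟨i, kv, hkv⟩ b h
  interval_cases kv
  · exact sym_v S i b h
  · exact sym_w S i b h
  · exact sym_x S i b h
  · exact sym_y S i b h
  · exact sym_a S i b h
  · exact sym_b S i b h

lemma irr_all : ∀ a : ISAgent n, ISmatch n S a ≠ some a := by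
  rintro ⟨i, kv, hkv⟩ h
  interval_cases kv
  · replace h : some (if i ∈ S then ya i else wa i) = some (va i) := h
    rw [Option.some_inj] at h
    split_ifs at h <;> simp [va, wa, xa, ya, aa, ba, Prod.ext_iff, Fin.ext_iff] at h <;> exact absurd h (by decide)
  · replace h : some (if i ∈ S then xa i else va i) = some (wa i) := h
    rw [Option.some_inj] at h
    split_ifs at h <;> simp [va, wa, xa, ya, aa, ba, Prod.ext_iff, Fin.ext_iff] at h <;> exact absurd h (by decide)
  · replace h : some (if i ∈ S then wa i else ya i) = some (xa i) := h
    rw [Option.some_inj] at h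
    split_ifs at h <;> simp [va, wa, xa, ya, aa, ba, Prod.ext_iff, Fin.ext_iff] at h <;> exact absurd h (by decide)
  · replace h : some (if i ∈ S then va i else xa i) = some (ya i) := h
    rw [Option.some_inj] at h
    split_ifs at h <;> simp [va, wa, xa, ya, aa, ba, Prod.ext_iff, Fin.ext_iff] at h <;> exact absurd h (by decide)
  · replace h : some (ba i) = some (aa i) := h
    rw [Option.some_inj] at h
    simp [va, wa, xa, ya, aa, ba, Prod.ext_iff, Fin.ext_iff] at h <;> exact absurd h (by decide)
  · replace h : some (aa i) = some (ba i) := h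
    rw [Option.some_inj] at h
    simp [va, wa, xa, ya, aa, ba, Prod.ext_iff, Fin.ext_iff] at h <;> exact absurd h (by decide)

-- acceptability of matched partners
lemma acc_all : ∀ a b : ISAgent n, ISmatch n S a = some b → b ∈ ISpref n G a := by
  rintro ⟨i, kv, hkv⟩ b h
  interval_cases kv
  · replace h : some (if i ∈ S then ya i else wa i) = some b := h
    rw [Option.some_inj] at h
    subst h
    split_ifs <;>
      simp [ISpref, va, wa, xa, ya, aa, ba, Prod.ext_iff, Fin.ext_iff]
  · replace h : some (if i ∈ S then xa i else va i) = some b := h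
    rw [Option.some_inj] at h
    subst h
    split_ifs <;>
      simp [ISpref, va, wa, xa, ya, aa, ba, Prod.ext_iff, Fin.ext_iff]
  · replace h : some (if i ∈ S then wa i else ya i) = some b := h
    rw [Option.some_inj] at h
    subst h
    split_ifs <;>
      simp [ISpref, va, wa, xa, ya, aa, ba, Prod.ext_iff, Fin.ext_iff]
  · replace h : some (if i ∈ S then va i else xa i) = some b := h
    rw [Option.some_inj] at h
    subst h
    split_ifs <;>
      simp [ISpref, va, wa, xa, ya, aa, ba, Prod.ext_iff, Fin.ext_iff]
  · replace h : some (ba i) = some b := h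
    rw [Option.some_inj] at h
    subst h
    simp [ISpref, va, wa, xa, ya, aa, ba, Prod.ext_iff, Fin.ext_iff]
  · replace h : some (aa i) = some b := h
    rw [Option.some_inj] at h
    subst h
    simp [ISpref, va, wa, xa, ya, aa, ba, Prod.ext_iff, Fin.ext_iff]

-- rank computations / no blocking pairs
lemma nb_v (hS : ∀ i ∈ S, ∀ j ∈ S, ¬ G.Adj i j) (i : Fin n) (b : ISAgent n) :
    ¬ SRI.Blocks (SRI.mk (ISpref n G)) (ISmatch n S) (va i) b := by
  rintro ⟨-, hab, hba, ha, hb⟩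
  have hpa := ha (if i ∈ S then ya i else wa i) rfl
  by_cases hi : i ∈ S
  · rw [if_pos hi] at hpa
    have hbne : b ≠ ya i := by rintro rfl; exact absurd hpa (lt_irrefl _)
    have hmem : b ∈ aa i :: wa i ::
        ((Finset.sort (G.neighborFinset i) (· ≤ ·)).map va ++ [ya i]) := hab
    simp only [List.mem_cons, List.mem_append, List.mem_map, List.mem_singleton, List.not_mem_nil, or_false] at hmem
    rcases hmem with rfl | rfl | ⟨j, hjmem, rfl⟩ | rfl
    · have hpb := hb (ba i) rfl
      simp [SRI.rank, ISpref, List.idxOf_cons, beq_iff_eq, va, wa, xa, ya, aa, ba, Prod.ext_iff] at hpb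
    · have hpb := hb (if i ∈ S then xa i else va i) rfl
      rw [if_pos hi] at hpb
      simp [SRI.rank, ISpref, List.idxOf_cons, beq_iff_eq, va, wa, xa, ya, aa, ba, Prod.ext_iff] at hpb
    · rw [Finset.mem_sort, SimpleGraph.mem_neighborFinset] at hjmem
      by_cases hjS : j ∈ S
      · exact hS i hi j hjS hjmem
      · have hpb := hb (if j ∈ S then ya j else wa j) rfl
        rw [if_neg hjS] at hpb
        have h2 : (SRI.mk (ISpref n G)).rank (va j) (wa j) = 2 := by simp [SRI.rank, ISpref, List.idxOf_cons, beq_iff_eq, va, wa, xa, ya, aa, ba, Prod.ext_iff]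
        rw [h2] at hpb
        have hhead : va i = aa j := head_of_lt rfl hpb
        simp [va, aa, Prod.ext_iff] at hhead
    · exact hbne rfl
  · rw [if_neg hi] at hpa
    have h2 : (SRI.mk (ISpref n G)).rank (va i) (wa i) = 2 := by simp [SRI.rank, ISpref, List.idxOf_cons, beq_iff_eq, va, wa, xa, ya, aa, ba, Prod.ext_iff]
    rw [h2] at hpa
    obtain rfl : b = aa i := head_of_lt rfl hpa
    have hpb := hb (ba i) rfl
    simp [SRI.rank, ISpref, List.idxOf_cons, beq_iff_eq, va, wa, xa, ya, aa, ba, Prod.ext_iff] at hpb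

lemma nb_w (i : Fin n) (b : ISAgent n) :
    ¬ SRI.Blocks (SRI.mk (ISpref n G)) (ISmatch n S) (wa i) b := by
  rintro ⟨-, hab, hba, ha, hb⟩
  have hpa := ha (if i ∈ S then xa i else va i) rfl
  by_cases hi : i ∈ S
  · rw [if_pos hi] at hpa
    have h1 : (SRI.mk (ISpref n G)).rank (wa i) (xa i) = 1 := by simp [SRI.rank, ISpref, List.idxOf_cons, beq_iff_eq, va, wa, xa, ya, aa, ba, Prod.ext_iff]
    rw [h1] at hpa
    simp only [SRI.rank] at hpa
    omega
  · rw [if_neg hi] at hpa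
    have h2 : (SRI.mk (ISpref n G)).rank (wa i) (va i) = 2 := by simp [SRI.rank, ISpref, List.idxOf_cons, beq_iff_eq, va, wa, xa, ya, aa, ba, Prod.ext_iff]
    rw [h2] at hpa
    obtain rfl : b = xa i := head_of_lt rfl hpa
    have hpb := hb (if i ∈ S then wa i else ya i) rfl
    rw [if_neg hi] at hpb
    simp [SRI.rank, ISpref, List.idxOf_cons, beq_iff_eq, va, wa, xa, ya, aa, ba, Prod.ext_iff] at hpb

lemma nb_x (i : Fin n) (b : ISAgent n) :
    ¬ SRI.Blocks (SRI.mk (ISpref n G)) (ISmatch n S) (xa i) b := by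
  rintro ⟨-, hab, hba, ha, hb⟩
  have hpa := ha (if i ∈ S then wa i else ya i) rfl
  by_cases hi : i ∈ S
  · rw [if_pos hi] at hpa
    have h3 : (SRI.mk (ISpref n G)).rank (xa i) (wa i) = 3 := by simp [SRI.rank, ISpref, List.idxOf_cons, beq_iff_eq, va, wa, xa, ya, aa, ba, Prod.ext_iff]
    rw [h3] at hpa
    rcases two_of_lt (c := aa i) (d := ya i) (t := [wa i]) rfl hpa with rfl | rfl
    · have hpb := hb (ba i) rfl
      simp [SRI.rank, ISpref, List.idxOf_cons, beq_iff_eq, va, wa, xa, ya, aa, ba, Prod.ext_iff] at hpb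
    · have hpb := hb (if i ∈ S then va i else xa i) rfl
      rw [if_pos hi] at hpb
      simp [SRI.rank, ISpref, List.idxOf_cons, beq_iff_eq, va, wa, xa, ya, aa, ba, Prod.ext_iff] at hpb
  · rw [if_neg hi] at hpa
    have h2 : (SRI.mk (ISpref n G)).rank (xa i) (ya i) = 2 := by simp [SRI.rank, ISpref, List.idxOf_cons, beq_iff_eq, va, wa, xa, ya, aa, ba, Prod.ext_iff]
    rw [h2] at hpa
    obtain rfl : b = aa i := head_of_lt rfl hpa
    have hpb := hb (ba i) rfl
    simp [SRI.rank, ISpref, List.idxOf_cons, beq_iff_eq, va, wa, xa, ya, aa, ba, Prod.ext_iff] at hpb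

lemma nb_y (i : Fin n) (b : ISAgent n) :
    ¬ SRI.Blocks (SRI.mk (ISpref n G)) (ISmatch n S) (ya i) b := by
  rintro ⟨-, hab, hba, ha, hb⟩
  have hpa := ha (if i ∈ S then va i else xa i) rfl
  by_cases hi : i ∈ S
  · rw [if_pos hi] at hpa
    have h2 : (SRI.mk (ISpref n G)).rank (ya i) (va i) = 2 := by simp [SRI.rank, ISpref, List.idxOf_cons, beq_iff_eq, va, wa, xa, ya, aa, ba, Prod.ext_iff]
    rw [h2] at hpa
    obtain rfl : b = aa i := head_of_lt rfl hpa
    have hpb := hb (ba i) rfl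
    simp [SRI.rank, ISpref, List.idxOf_cons, beq_iff_eq, va, wa, xa, ya, aa, ba, Prod.ext_iff] at hpb
  · rw [if_neg hi] at hpa
    have h3 : (SRI.mk (ISpref n G)).rank (ya i) (xa i) = 3 := by simp [SRI.rank, ISpref, List.idxOf_cons, beq_iff_eq, va, wa, xa, ya, aa, ba, Prod.ext_iff]
    rw [h3] at hpa
    rcases two_of_lt (c := aa i) (d := va i) (t := [xa i]) rfl hpa with rfl | rfl
    · have hpb := hb (ba i) rfl
      simp [SRI.rank, ISpref, List.idxOf_cons, beq_iff_eq, va, wa, xa, ya, aa, ba, Prod.ext_iff] at hpb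
    · have hpb := hb (if i ∈ S then ya i else wa i) rfl
      rw [if_neg hi] at hpb
      have h2 : (SRI.mk (ISpref n G)).rank (va i) (wa i) = 2 := by simp [SRI.rank, ISpref, List.idxOf_cons, beq_iff_eq, va, wa, xa, ya, aa, ba, Prod.ext_iff]
      rw [h2] at hpb
      have hhead : ya i = aa i := head_of_lt rfl hpb
      simp [ya, aa, Prod.ext_iff] at hhead

lemma nb_a (i : Fin n) (b : ISAgent n) :
    ¬ SRI.Blocks (SRI.mk (ISpref n G)) (ISmatch n S) (aa i) b := by
  rintro ⟨-, hab, hba, ha, hb⟩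
  have hpa := ha (ba i) rfl
  have h2 : (SRI.mk (ISpref n G)).rank (aa i) (ba i) = 2 := by simp [SRI.rank, ISpref, List.idxOf_cons, beq_iff_eq, va, wa, xa, ya, aa, ba, Prod.ext_iff]
  rw [h2] at hpa
  obtain rfl : b = wa i := head_of_lt rfl hpa
  have hpb := hb (if i ∈ S then xa i else va i) rfl
  by_cases hi : i ∈ S
  · rw [if_pos hi] at hpb
    simp [SRI.rank, ISpref, List.idxOf_cons, beq_iff_eq, va, wa, xa, ya, aa, ba, Prod.ext_iff] at hpb
  · rw [if_neg hi] at hpb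
    simp [SRI.rank, ISpref, List.idxOf_cons, beq_iff_eq, va, wa, xa, ya, aa, ba, Prod.ext_iff] at hpb

lemma nb_b (i : Fin n) (b : ISAgent n) :
    ¬ SRI.Blocks (SRI.mk (ISpref n G)) (ISmatch n S) (ba i) b := by
  rintro ⟨-, hab, hba, ha, hb⟩
  have hpa := ha (aa i) rfl
  have h2 : (SRI.mk (ISpref n G)).rank (ba i) (aa i) = 2 := by simp [SRI.rank, ISpref, List.idxOf_cons, beq_iff_eq, va, wa, xa, ya, aa, ba, Prod.ext_iff]
  rw [h2] at hpa
  obtain rfl : b = wa i := head_of_lt rfl hpa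
  have hpb := hb (if i ∈ S then xa i else va i) rfl
  by_cases hi : i ∈ S
  · rw [if_pos hi] at hpb
    simp [SRI.rank, ISpref, List.idxOf_cons, beq_iff_eq, va, wa, xa, ya, aa, ba, Prod.ext_iff] at hpb
  · rw [if_neg hi] at hpb
    simp [SRI.rank, ISpref, List.idxOf_cons, beq_iff_eq, va, wa, xa, ya, aa, ba, Prod.ext_iff] at hpb

lemma nb_all (hS : ∀ i ∈ S, ∀ j ∈ S, ¬ G.Adj i j) :
    ∀ a b : ISAgent n, ¬ SRI.Blocks (SRI.mk (ISpref n G)) (ISmatch n S) a b := by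
  rintro ⟨i, kv, hkv⟩ b
  interval_cases kv
  · exact nb_v G S hS i b
  · exact nb_w G S i b
  · exact nb_x G S i b
  · exact nb_y G S i b
  · exact nb_a G S i b
  · exact nb_b G S i b

-- rank-1 characterisation
lemma rank1_all : ∀ ag b : ISAgent n, ISmatch n S ag = some b →
    ((SRI.mk (ISpref n G)).rank ag b = 1 ↔ ∃ i ∈ S, ag = wa i) := by
  rintro ⟨i, kv, hkv⟩ b h
  interval_cases kv
  · replace h : some (if i ∈ S then ya i else wa i) = some b := h
    rw [Option.some_inj] at h
    subst h
    apply iff_of_false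
    · intro h1
      have h2 : (SRI.mk (ISpref n G)).rank (va i) ((if i ∈ S then ya i else wa i)) < 2 := by
        have h1' : (SRI.mk (ISpref n G)).rank (va i) ((if i ∈ S then ya i else wa i)) = 1 := h1
        omega
      have hhead : (if i ∈ S then ya i else wa i) = aa i :=
        head_of_lt (I := SRI.mk (ISpref n G)) (a := va i) rfl h2
      split_ifs at hhead <;>
        simp [wa, ya, aa, Prod.ext_iff] at hhead
    · rintro ⟨i', hi', he⟩
      exact (by omega : ¬(0:ℕ) = 1) (congrArg (fun p => (p.2).val) he)
  · replace h : some (if i ∈ S then xa i else va i) = some b := h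
    rw [Option.some_inj] at h
    subst h
    by_cases hi : i ∈ S
    · rw [if_pos hi]
      apply iff_of_true
      · simp [SRI.rank, ISpref, List.idxOf_cons, beq_iff_eq, va, wa, xa, ya, aa, ba, Prod.ext_iff]
      · exact ⟨i, hi, rfl⟩
    · rw [if_neg hi]
      apply iff_of_false
      · intro h1
        have h1' : (SRI.mk (ISpref n G)).rank (wa i) (va i) = 1 := h1
        have hhead : va i = xa i :=
          head_of_lt (I := SRI.mk (ISpref n G)) (a := wa i) rfl (by omega)
        simp [va, xa, Prod.ext_iff] at hhead
      · rintro ⟨i', hi', he⟩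
        have h2 : i = i' := congrArg Prod.fst he
        exact hi (h2 ▸ hi')
  · replace h : some (if i ∈ S then wa i else ya i) = some b := h
    rw [Option.some_inj] at h
    subst h
    apply iff_of_false
    · intro h1
      have h2 : (SRI.mk (ISpref n G)).rank (xa i) ((if i ∈ S then wa i else ya i)) < 2 := by
        have h1' : (SRI.mk (ISpref n G)).rank (xa i) ((if i ∈ S then wa i else ya i)) = 1 := h1
        omega
      have hhead : (if i ∈ S then wa i else ya i) = aa i :=
        head_of_lt (I := SRI.mk (ISpref n G)) (a := xa i) rfl h2
      split_ifs at hhead <;>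
        simp [wa, ya, aa, Prod.ext_iff] at hhead
    · rintro ⟨i', hi', he⟩
      exact (by omega : ¬(2:ℕ) = 1) (congrArg (fun p => (p.2).val) he)
  · replace h : some (if i ∈ S then va i else xa i) = some b := h
    rw [Option.some_inj] at h
    subst h
    apply iff_of_false
    · intro h1
      have h2 : (SRI.mk (ISpref n G)).rank (ya i) ((if i ∈ S then va i else xa i)) < 2 := by
        have h1' : (SRI.mk (ISpref n G)).rank (ya i) ((if i ∈ S then va i else xa i)) = 1 := h1
        omega
      have hhead : (if i ∈ S then va i else xa i) = aa i :=
        head_of_lt (I := SRI.mk (ISpref n G)) (a := ya i) rfl h2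
      split_ifs at hhead <;>
        simp [va, xa, aa, Prod.ext_iff] at hhead
    · rintro ⟨i', hi', he⟩
      exact (by omega : ¬(3:ℕ) = 1) (congrArg (fun p => (p.2).val) he)
  · replace h : some (ba i) = some b := h
    rw [Option.some_inj] at h
    subst h
    apply iff_of_false
    · intro h1
      have h2 : (SRI.mk (ISpref n G)).rank (aa i) (ba i) < 2 := by
        have h1' : (SRI.mk (ISpref n G)).rank (aa i) (ba i) = 1 := h1
        omega
      have hhead : ba i = wa i :=
        head_of_lt (I := SRI.mk (ISpref n G)) (a := aa i) rfl h2
      simp [ba, wa, Prod.ext_iff] at hhead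
    · rintro ⟨i', hi', he⟩
      exact (by omega : ¬(4:ℕ) = 1) (congrArg (fun p => (p.2).val) he)
  · replace h : some (aa i) = some b := h
    rw [Option.some_inj] at h
    subst h
    apply iff_of_false
    · intro h1
      have h2 : (SRI.mk (ISpref n G)).rank (ba i) (aa i) < 2 := by
        have h1' : (SRI.mk (ISpref n G)).rank (ba i) (aa i) = 1 := h1
        omega
      have hhead : aa i = wa i :=
        head_of_lt (I := SRI.mk (ISpref n G)) (a := ba i) rfl h2
      simp [aa, wa, Prod.ext_iff] at hhead
    · rintro ⟨i', hi', he⟩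
      exact (by omega : ¬(5:ℕ) = 1) (congrArg (fun p => (p.2).val) he)

end ISRedProof
open ISAgent in
/-- If `S` is an independent set of `G` of size `k`, then the matching pairing
`{a_i,b_i}` for all `i`, `{v_i,w_i}` and `{x_i,y_i}` for `u_i ∉ S`, and
`{v_i,y_i}` and `{w_i,x_i}` for `u_i ∈ S`, is a stable matching of the
independent-set reduction instance in which exactly `k` agents — namely the agents
`w_i` with `u_i ∈ S` — are matched to their (original) first choice. -/
theorem is_reduction_indep_gives_stable {n : ℕ} (G : SimpleGraph (Fin n))
    [DecidableRel G.Adj]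
    (S : Finset (Fin n)) (hS : ∀ i ∈ S, ∀ j ∈ S, ¬ G.Adj i j) :
    (SRI.mk (ISpref n G)).IsStable (ISmatch n S) ∧
      (SRI.mk (ISpref n G)).nChoices (ISmatch n S) 1 = S.card ∧
      (∀ (ag : ISAgent n) (b : ISAgent n), ISmatch n S ag = some b →
        ((SRI.mk (ISpref n G)).rank ag b = 1 ↔ ∃ i ∈ S, ag = wa i)) := by
  refine ⟨⟨⟨ISRedProof.sym_all S, ISRedProof.irr_all S⟩,
    fun a b h => ⟨ISRedProof.acc_all G S a b h,
      ISRedProof.acc_all G S b a (ISRedProof.sym_all S a b h)⟩,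
    ISRedProof.nb_all G S hS⟩, ?_, ISRedProof.rank1_all G S⟩
  have hinj : Function.Injective (wa (n := n)) := fun a b h => congrArg Prod.fst h
  unfold SRI.nChoices
  rw [← Finset.card_image_of_injective S hinj]
  congr 1
  ext a
  simp only [Finset.mem_filter, Finset.mem_univ, true_and, Finset.mem_image]
  constructor
  · rintro ⟨b, hb, hr⟩
    obtain ⟨i, hi, rfl⟩ := (ISRedProof.rank1_all G S a b hb).1 hr
    exact ⟨i, hi, rfl⟩
  · rintro ⟨i, hi, rfl⟩
    have hm : ISmatch n S (wa i) = some (xa i) := by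
      show some (if i ∈ S then xa i else va i) = _
      rw [if_pos hi]
    exact ⟨xa i, hm, (ISRedProof.rank1_all G S _ _ hm).2 ⟨i, hi, rfl⟩⟩
end

section
/- In the independent-set reduction instance for FC-SRI, if M is a stable matching in which at least K agents are matched to their first choice, then the set S of vertices u_i whose agent group is matched as {v_i, y_i}, {w_i, x_i} is an independent set of G of size at least K. -/
open ISAgent List

namespace ISRed

variable {n : ℕ} (G : SimpleGraph (Fin n)) [DecidableRel G.Adj] {M : ISAgent n → Option (ISAgent n)}

section Ranks
variable (i : Fin n)
lemma rk_va_aa : (SRI.mk (ISpref n G)).rank (va i) (aa i) = 1 := by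
  simp [SRI.rank, ISpref, va, wa, xa, ya, aa, ba]
lemma rk_wa_xa : (SRI.mk (ISpref n G)).rank (wa i) (xa i) = 1 := by
  simp [SRI.rank, ISpref, va, wa, xa, ya, aa, ba]
lemma rk_wa_va : (SRI.mk (ISpref n G)).rank (wa i) (va i) = 2 := by
  simp [SRI.rank, ISpref, va, wa, xa, ya, aa, ba]
lemma rk_wa_aa : (SRI.mk (ISpref n G)).rank (wa i) (aa i) = 3 := by
  simp [SRI.rank, ISpref, va, wa, xa, ya, aa, ba]
lemma rk_wa_ba : (SRI.mk (ISpref n G)).rank (wa i) (ba i) = 4 := by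
  simp [SRI.rank, ISpref, va, wa, xa, ya, aa, ba]
lemma rk_xa_ya : (SRI.mk (ISpref n G)).rank (xa i) (ya i) = 2 := by
  simp [SRI.rank, ISpref, va, wa, xa, ya, aa, ba]
lemma rk_xa_wa : (SRI.mk (ISpref n G)).rank (xa i) (wa i) = 3 := by
  simp [SRI.rank, ISpref, va, wa, xa, ya, aa, ba]
lemma rk_aa_wa : (SRI.mk (ISpref n G)).rank (aa i) (wa i) = 1 := by
  simp [SRI.rank, ISpref, va, wa, xa, ya, aa, ba]
lemma rk_aa_ba : (SRI.mk (ISpref n G)).rank (aa i) (ba i) = 2 := by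
  simp [SRI.rank, ISpref, va, wa, xa, ya, aa, ba]
lemma rk_aa_va : (SRI.mk (ISpref n G)).rank (aa i) (va i) = 3 := by
  simp [SRI.rank, ISpref, va, wa, xa, ya, aa, ba]
lemma rk_aa_xa : (SRI.mk (ISpref n G)).rank (aa i) (xa i) = 4 := by
  simp [SRI.rank, ISpref, va, wa, xa, ya, aa, ba]
lemma rk_aa_ya : (SRI.mk (ISpref n G)).rank (aa i) (ya i) = 5 := by
  simp [SRI.rank, ISpref, va, wa, xa, ya, aa, ba]
lemma rk_ya_aa : (SRI.mk (ISpref n G)).rank (ya i) (aa i) = 1 := by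
  simp [SRI.rank, ISpref, va, wa, xa, ya, aa, ba]
lemma rk_ba_wa : (SRI.mk (ISpref n G)).rank (ba i) (wa i) = 1 := by
  simp [SRI.rank, ISpref, va, wa, xa, ya, aa, ba]
lemma rk_ba_aa : (SRI.mk (ISpref n G)).rank (ba i) (aa i) = 2 := by
  simp [SRI.rank, ISpref, va, wa, xa, ya, aa, ba]
end Ranks

lemma pref_va (i : Fin n) : ISpref n G (va i) = [aa i, wa i] ++
    ((Finset.sort (G.neighborFinset i) (· ≤ ·)).map va ++ [ya i]) := rfl
lemma pref_wa (i : Fin n) : ISpref n G (wa i) = [xa i, va i, aa i, ba i] := rfl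
lemma pref_xa (i : Fin n) : ISpref n G (xa i) = [aa i, ya i, wa i] := rfl
lemma pref_ya (i : Fin n) : ISpref n G (ya i) = [aa i, va i, xa i] := rfl
lemma pref_aa (i : Fin n) : ISpref n G (aa i) = [wa i, ba i, va i, xa i, ya i] := rfl
lemma pref_ba (i : Fin n) : ISpref n G (ba i) = [wa i, aa i] := rfl

lemma rk_va_wa (i : Fin n) : (SRI.mk (ISpref n G)).rank (va i) (wa i) = 2 := by
  have : wa i ∈ [aa i, wa i] := by simp
  simp only [SRI.rank, pref_va, idxOf_append_of_mem this]
  simp [va, wa, aa]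

/-- lower bound on v's ranking of anything other than a_i, w_i -/
lemma rk_va_lb (i : Fin n) {c : ISAgent n} (h1 : c ≠ aa i) (h2 : c ≠ wa i) :
    2 < (SRI.mk (ISpref n G)).rank (va i) c := by
  letI : BEq (ISAgent n) := instBEqOfDecidableEq
  have hnm : c ∉ [aa i, wa i] := by simp [h1, h2]
  simp only [SRI.rank, pref_va, idxOf_append_of_notMem hnm]
  have : [aa i, wa i].length = 2 := rfl
  omega

lemma rk_va_adj {i j : Fin n} (h : G.Adj i j) :
    (SRI.mk (ISpref n G)).rank (va i) (va j) < (SRI.mk (ISpref n G)).rank (va i) (ya i) := by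
  have hmem : va j ∈ (Finset.sort (G.neighborFinset i) (· ≤ ·)).map va := by
    simp only [List.mem_map]
    exact ⟨j, by simp [h], rfl⟩
  have h1 : va (n := n) j ∉ [aa i, wa i] := by simp [va, aa, wa]
  have h2 : ya (n := n) i ∉ [aa i, wa i] := by simp [ya, aa, wa]
  have h3 : ya i ∉ (Finset.sort (G.neighborFinset i) (· ≤ ·)).map va := by
    simp [List.mem_map, va, ya]
  simp only [SRI.rank, pref_va]
  letI : BEq (ISAgent n) := instBEqOfDecidableEq
  rw [idxOf_append_of_notMem h1, idxOf_append_of_notMem h2,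
    idxOf_append_of_mem hmem, idxOf_append_of_notMem h3]
  have := idxOf_lt_length_iff.2 hmem
  omega

lemma va_acc_adj {i j : Fin n} (h : G.Adj i j) :
    (SRI.mk (ISpref n G)).acceptable (va i) (va j) := by
  simp only [SRI.acceptable, pref_va, List.mem_append, List.mem_map]
  exact Or.inr (Or.inl ⟨j, by simp [h], rfl⟩)

lemma head_of_rank_one {a b c : ISAgent n} {t : List (ISAgent n)}
    (hr : (SRI.mk (ISpref n G)).rank a b = 1)
    (hp : ISpref n G a = c :: t) : b = c := by
  by_cases hbc : b = c
  · exact hbc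
  · exfalso
    simp only [SRI.rank] at hr
    letI : BEq (ISAgent n) := instBEqOfDecidableEq
    rw [hp, List.idxOf_cons_ne _ (fun h => hbc h.symm)] at hr
    omega

variable (hM : (SRI.mk (ISpref n G)).IsStable M)
include hM

lemma aux_ab (i : Fin n)
    (hc : ∀ d, M (aa i) = some d → 2 < (SRI.mk (ISpref n G)).rank (aa i) d) : False := by
  obtain ⟨⟨hsym, -⟩, hacc, hnb⟩ := hM
  have hba : M (ba i) = none ∨ M (ba i) = some (wa i) ∨ M (ba i) = some (aa i) := by
    cases hm : M (ba i) with
    | none => exact Or.inl rfl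
    | some d =>
      have hd := (hacc _ _ hm).1
      simp only [SRI.acceptable, pref_ba, List.mem_cons, List.not_mem_nil, or_false] at hd
      rcases hd with h | h
      · exact Or.inr (Or.inl (by rw [h]))
      · exact Or.inr (Or.inr (by rw [h]))
  rcases hba with hb | hb | hb
  · refine hnb (ba i) (aa i) ⟨by simp [ba, aa], by simp [SRI.acceptable, pref_ba],
      by simp [SRI.acceptable, pref_aa], fun c hcc => ?_, fun d hd => ?_⟩
    · rw [hb] at hcc; cases hcc
    · rw [rk_aa_ba]
      exact hc d hd
  · have hw : M (wa i) = some (ba i) := hsym _ _ hb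
    refine hnb (wa i) (aa i) ⟨by simp [wa, aa], by simp [SRI.acceptable, pref_wa],
      by simp [SRI.acceptable, pref_aa], fun c hcc => ?_, fun d hd => ?_⟩
    · rw [hw] at hcc; injection hcc with hcc; subst hcc
      rw [rk_wa_aa, rk_wa_ba]; omega
    · have := hc d hd
      rw [rk_aa_wa]; omega
  · have := hc _ (hsym _ _ hb)
    rw [rk_aa_ba] at this
    omega

lemma aux_wa (i : Fin n) (ha : M (aa i) = some (wa i)) : False := by
  obtain ⟨⟨hsym, -⟩, hacc, hnb⟩ := hM
  have hw : M (wa i) = some (aa i) := hsym _ _ ha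
  refine hnb (va i) (wa i) ⟨by simp [va, wa],
    by simp [SRI.acceptable, pref_va], by simp [SRI.acceptable, pref_wa],
    fun c hcc => ?_, fun d hd => ?_⟩
  · rw [rk_va_wa]
    by_cases h1 : c = aa i
    · subst h1
      have := hsym _ _ hcc
      rw [ha] at this; cases this  -- some (wa i) = some (va i) impossible
    · by_cases h2 : c = wa i
      · subst h2
        have := hsym _ _ hcc
        rw [hw] at this
        injection this with h3
        exact absurd h3.symm (by simp [va, aa])
      · exact rk_va_lb G i h1 h2
  · rw [hw] at hd; injection hd with hd; subst hd
    rw [rk_wa_va, rk_wa_aa]; omega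

lemma first_choice {a b : ISAgent n} (hm : M a = some b)
    (hr : (SRI.mk (ISpref n G)).rank a b = 1) : a = wa a.1 ∧ b = xa a.1 := by
  obtain ⟨i, k⟩ := a
  rcases k with ⟨kv, hk⟩
  interval_cases kv
  · -- v_i matched to a_i : impossible
    have hb : b = aa i := head_of_rank_one G hr rfl
    subst hb
    have hma : M (aa i) = some (va i) := hM.1.1 _ _ hm
    exact absurd (aux_ab G hM i (fun d hd => by
      rw [hma] at hd; injection hd with hd; subst hd; rw [rk_aa_va]; omega)) id
  · -- w_i matched to x_i : the good case
    exact ⟨rfl, head_of_rank_one G hr rfl⟩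
  · -- x_i matched to a_i : impossible
    have hb : b = aa i := head_of_rank_one G hr rfl
    subst hb
    have hma : M (aa i) = some (xa i) := hM.1.1 _ _ hm
    exact absurd (aux_ab G hM i (fun d hd => by
      rw [hma] at hd; injection hd with hd; subst hd; rw [rk_aa_xa]; omega)) id
  · -- y_i matched to a_i : impossible
    have hb : b = aa i := head_of_rank_one G hr rfl
    subst hb
    have hma : M (aa i) = some (ya i) := hM.1.1 _ _ hm
    exact absurd (aux_ab G hM i (fun d hd => by
      rw [hma] at hd; injection hd with hd; subst hd; rw [rk_aa_ya]; omega)) id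
  · -- a_i matched to w_i : impossible
    have hb : b = wa i := head_of_rank_one G hr rfl
    subst hb
    exact absurd (aux_wa G hM i hm) id
  · -- b_i matched to w_i : impossible
    have hb : b = wa i := head_of_rank_one G hr rfl
    subst hb
    exfalso
    obtain ⟨⟨hsym, -⟩, hacc, hnb⟩ := hM
    have hw : M (wa i) = some (ba i) := hsym _ _ hm
    refine hnb (wa i) (aa i) ⟨by simp [wa, aa], by simp [SRI.acceptable, pref_wa],
      by simp [SRI.acceptable, pref_aa], fun c hcc => ?_, fun d hd => ?_⟩
    · rw [hw] at hcc; injection hcc with hcc; subst hcc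
      rw [rk_wa_aa, rk_wa_ba]; omega
    · -- M (aa i) = some d, show rank aa wa < rank aa d
      rw [rk_aa_wa]
      have hdm := (hacc _ _ hd).1
      simp only [SRI.acceptable, pref_aa, List.mem_cons, List.not_mem_nil, or_false] at hdm
      rcases hdm with h | h | h | h | h
      · subst h
        have h2 := hsym _ _ hd
        rw [hw] at h2; injection h2 with h2
        exact absurd h2 (by simp [ba, aa])
      · subst h
        rw [rk_aa_ba]; omega
      · subst h; rw [rk_aa_va]; omega
      · subst h; rw [rk_aa_xa]; omega
      · subst h; rw [rk_aa_ya]; omega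
lemma step2 {i : Fin n} (hw : M (wa i) = some (xa i)) : M (va i) = some (ya i) := by
  obtain ⟨⟨hsym, -⟩, hacc, hnb⟩ := id hM
  have hx : M (xa i) = some (wa i) := hsym _ _ hw
  -- a_i must be matched to b_i
  have hab : M (aa i) = some (ba i) := by
    cases hma : M (aa i) with
    | none => exact absurd (aux_ab G hM i (fun d hd => by rw [hma] at hd; cases hd)) id
    | some d =>
      have hdm := (hacc _ _ hma).1
      simp only [SRI.acceptable, pref_aa, List.mem_cons, List.not_mem_nil, or_false] at hdm
      rcases hdm with h | h | h | h | h
      · subst h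
        have h2 := hsym _ _ hma
        rw [hw] at h2; injection h2 with h2
        exact absurd h2 (by simp [xa, aa])
      · rw [h]
      · -- M aa = va → M va = aa, rank 1 → first_choice gives va i = wa _, absurd
        subst h
        have h2 := hsym _ _ hma
        have := (first_choice G hM h2 (rk_va_aa G i)).1
        exact absurd this (by simp [va, wa])
      · subst h
        have h2 := hsym _ _ hma
        rw [hx] at h2; injection h2 with h2
        exact absurd h2 (by simp [wa, aa])
      · subst h
        have h2 := hsym _ _ hma
        have := (first_choice G hM h2 (rk_ya_aa G i)).1
        exact absurd this (by simp [ya, wa])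
  -- y_i must be matched to v_i
  have hy : M (ya i) = some (va i) := by
    cases hmy : M (ya i) with
    | none =>
      exfalso
      refine hnb (xa i) (ya i) ⟨by simp [xa, ya], by simp [SRI.acceptable, pref_xa],
        by simp [SRI.acceptable, pref_ya], fun c hcc => ?_, fun d hd => ?_⟩
      · rw [hx] at hcc; injection hcc with hcc; subst hcc
        rw [rk_xa_ya, rk_xa_wa]; omega
      · rw [hmy] at hd; cases hd
    | some d =>
      have hdm := (hacc _ _ hmy).1
      simp only [SRI.acceptable, pref_ya, List.mem_cons, List.not_mem_nil, or_false] at hdm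
      rcases hdm with h | h | h
      · subst h
        have h2 := hsym _ _ hmy
        rw [hab] at h2; injection h2 with h2
        exact absurd h2 (by simp [ba, ya])
      · rw [h]
      · subst h
        have h2 := hsym _ _ hmy
        rw [hx] at h2; injection h2 with h2
        exact absurd h2 (by simp [wa, ya])
  exact hsym _ _ hy

lemma indep {i j : Fin n} (hi : M (va i) = some (ya i)) (hj : M (va j) = some (ya j))
    (hadj : G.Adj i j) : False := by
  obtain ⟨⟨hsym, -⟩, hacc, hnb⟩ := id hM
  refine hnb (va i) (va j) ⟨by simp [va, hadj.ne], va_acc_adj G hadj,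
    va_acc_adj G hadj.symm, fun c hcc => ?_, fun d hd => ?_⟩
  · rw [hi] at hcc; injection hcc with hcc; subst hcc
    exact rk_va_adj G hadj
  · rw [hj] at hd; injection hd with hd; subst hd
    exact rk_va_adj G hadj.symm
end ISRed

open ISAgent in
/-- If `M` is a stable matching of the independent-set reduction instance in which
at least `K` agents are matched to their first choice, then the set `S` of vertices
`u_i` whose agent group is matched as `{v_i, y_i}, {w_i, x_i}` is an independent
set of `G` of size at least `K`. -/
theorem is_reduction_stable_gives_indep {n : ℕ} (G : SimpleGraph (Fin n))
    [DecidableRel G.Adj] (K : ℕ)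
    (M : ISAgent n → Option (ISAgent n))
    (hM : (SRI.mk (ISpref n G)).IsStable M)
    (hcount : K ≤ (SRI.mk (ISpref n G)).nChoices M 1) :
    (∀ i ∈ Finset.univ.filter
        (fun i : Fin n => M (va i) = some (ya i) ∧ M (wa i) = some (xa i)),
      ∀ j ∈ Finset.univ.filter
        (fun i : Fin n => M (va i) = some (ya i) ∧ M (wa i) = some (xa i)),
        ¬ G.Adj i j) ∧
      K ≤ (Finset.univ.filter
        (fun i : Fin n => M (va i) = some (ya i) ∧ M (wa i) = some (xa i))).card := by

  constructor
  · intro i hi j hj hadj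
    simp only [Finset.mem_filter, Finset.mem_univ, true_and] at hi hj
    exact ISRed.indep G hM hi.1 hj.1 hadj
  · refine le_trans hcount ?_
    unfold SRI.nChoices
    apply Finset.card_le_card_of_injOn (fun a => a.1)
    · intro a ha
      simp only [Finset.mem_coe, Finset.mem_filter, Finset.mem_univ, true_and] at ha ⊢
      obtain ⟨b, hab, hr⟩ := ha
      obtain ⟨haw, hbx⟩ := ISRed.first_choice G hM hab hr
      rw [haw, hbx] at hab
      exact ⟨ISRed.step2 G hM hab, hab⟩
    · intro a ha a' ha' hfst
      simp only [Finset.mem_coe, Finset.mem_filter, Finset.mem_univ, true_and] at ha ha'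
      obtain ⟨b, hab, hr⟩ := ha
      obtain ⟨b', hab', hr'⟩ := ha'
      have h1 := (ISRed.first_choice G hM hab hr).1
      have h2 := (ISRed.first_choice G hM hab' hr').1
      simp only at hfst
      rw [h1, h2, hfst]
end
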